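/- Let A be a finite-dimensional semisimple algebra over a field of characteristic zero (hence separable), and E an A-bimodule. Then for every n ≥ 0 the Hochschild coboundary map Cⁿ(A,E) → Z^{n+1}(A,E) is surjective; equivalently, the Hochschild cohomology H^{n+1}(A,E) vanishes for n ≥ 0. -/

import Mathlib

set_option linter.unusedSectionVars false

section TraceForm

variable (k A : Type*) [Field k] [Ring A] [Algebra k A] [FiniteDimensional k A]

noncomputable def tau16 : A →ₗ[k] k :=
  (LinearMap.trace k A).comp (LinearMap.mul k A)

noncomputable def bform16 : A →ₗ[k] A →ₗ[k] k :=
  (LinearMap.mul k A).compr₂ (tau16 k A)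

variable {k A}

lemma bform16_apply (x y : A) : bform16 k A x y = tau16 k A (x * y) := rfl

lemma tau16_comm (x y : A) : tau16 k A (x * y) = tau16 k A (y * x) := by
  have h : ∀ u v : A, LinearMap.mul k A (u * v)
      = (LinearMap.mul k A u) * (LinearMap.mul k A v) := by
    intro u v; ext z; simp [LinearMap.mul_apply', mul_assoc]
  show (LinearMap.trace k A) (LinearMap.mul k A (x * y))
      = (LinearMap.trace k A) (LinearMap.mul k A (y * x))
  rw [h, h, LinearMap.trace_mul_comm]

lemma bform16_nondeg [CharZero k] [IsSemisimpleRing A] :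
    LinearMap.BilinForm.Nondegenerate (bform16 k A) := by
  classical
  refine (show (bform16 k A).IsRefl from fun x y h => by
    rwa [bform16_apply, tau16_comm, ← bform16_apply]).nondegenerate_iff_separatingLeft.mpr ?_
  intro w hw
  let I : Ideal A :=
    { carrier := {z | ∀ c, tau16 k A (z * c) = 0}
      add_mem' := by intro a b ha hb c; simp only [add_mul, map_add, ha c, hb c, add_zero]
      zero_mem' := by intro c; simp
      smul_mem' := by
        intro r z hz c
        show tau16 k A (r • z * c) = 0
        have h2 : r • z * c = r * (z * c) := by rw [smul_eq_mul, mul_assoc]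
        rw [h2, tau16_comm, mul_assoc, hz (c * r)] }
  obtain ⟨e, he, hsp⟩ := IsSemisimpleRing.ideal_eq_span_idempotent I
  have heI : e ∈ I := by rw [hsp]; exact Ideal.subset_span rfl
  have htr : (LinearMap.trace k A) (LinearMap.mul k A e) = 0 := by
    have := heI 1
    rwa [mul_one] at this
  have hproj : LinearMap.IsProj (LinearMap.range (LinearMap.mul k A e))
      (LinearMap.mul k A e) := by
    refine ⟨fun z => LinearMap.mem_range_self _ _, fun z hz => ?_⟩
    obtain ⟨w', rfl⟩ := hz
    simp only [LinearMap.mul_apply', ← mul_assoc, he.eq]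
  have htr2 := hproj.trace
  rw [htr] at htr2
  have hfr : Module.finrank k (LinearMap.range (LinearMap.mul k A e)) = 0 := by
    exact_mod_cast htr2.symm
  have hbot : LinearMap.range (LinearMap.mul k A e) = ⊥ :=
    Submodule.finrank_eq_zero.mp hfr
  have he0 : e = 0 := by
    have hmem : e ∈ LinearMap.range (LinearMap.mul k A e) :=
      ⟨1, by simp [LinearMap.mul_apply']⟩
    rw [hbot] at hmem
    simpa using hmem
  have hwI : w ∈ I := fun c => hw c
  rw [hsp, he0] at hwI
  rw [Ideal.span_singleton_eq_bot.mpr rfl] at hwI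
  simpa using hwI

end TraceForm
section DualBasis

variable {k A : Type*} [Field k] [CharZero k] [Ring A] [Algebra k A]
  [FiniteDimensional k A] [IsSemisimpleRing A]

noncomputable def yB16 (k A : Type*) [Field k] [Ring A] [Algebra k A]
    [FiniteDimensional k A] : Module.Basis (Fin (Module.finrank k A)) k A :=
  Module.finBasis k A

noncomputable def xB16 (k A : Type*) [Field k] [CharZero k] [Ring A] [Algebra k A]
    [FiniteDimensional k A] [IsSemisimpleRing A] :
    Module.Basis (Fin (Module.finrank k A)) k A :=
  LinearMap.BilinForm.dualBasis (bform16 k A) bform16_nondeg (yB16 k A)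

lemma xB16_repr (w : A) (i : Fin (Module.finrank k A)) :
    (xB16 k A).repr w i = bform16 k A w (yB16 k A i) :=
  LinearMap.BilinForm.dualBasis_repr_apply _ _ _ _

lemma bform16_dual (i j : Fin (Module.finrank k A)) :
    bform16 k A (xB16 k A i) (yB16 k A j) = if j = i then 1 else 0 :=
  LinearMap.BilinForm.apply_dualBasis_left _ _ _ _

lemma yB16_repr (w : A) (i : Fin (Module.finrank k A)) :
    (yB16 k A).repr w i = bform16 k A (xB16 k A i) w := by
  have h : (yB16 k A).coord i = bform16 k A (xB16 k A i) := by
    refine Module.Basis.ext (yB16 k A) fun j => ?_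
    rw [Module.Basis.coord_apply, Module.Basis.repr_self, bform16_dual, Finsupp.single_apply]
  have := LinearMap.congr_fun h w
  rwa [Module.Basis.coord_apply] at this

lemma expand_x (w : A) : ∑ j, bform16 k A w (yB16 k A j) • xB16 k A j = w := by
  calc ∑ j, bform16 k A w (yB16 k A j) • xB16 k A j
      = ∑ j, (xB16 k A).repr w j • xB16 k A j :=
        Finset.sum_congr rfl fun j _ => by rw [xB16_repr]
    _ = w := Module.Basis.sum_repr _ w

lemma expand_y (w : A) : ∑ j, bform16 k A (xB16 k A j) w • yB16 k A j = w := by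
  calc ∑ j, bform16 k A (xB16 k A j) w • yB16 k A j
      = ∑ j, (yB16 k A).repr w j • yB16 k A j :=
        Finset.sum_congr rfl fun j _ => by rw [yB16_repr]
    _ = w := Module.Basis.sum_repr _ w

lemma bform16_shift (u w c : A) :
    bform16 k A (c * u) w = bform16 k A u (w * c) := by
  rw [bform16_apply, bform16_apply, mul_assoc, tau16_comm, ← mul_assoc]

lemma P1_16 : ∑ p, xB16 k A p * yB16 k A p = (1 : A) := by
  classical
  have h : ∀ c, bform16 k A (∑ p, xB16 k A p * yB16 k A p) c = bform16 k A 1 c := by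
    intro c
    have hL : bform16 k A (∑ p, xB16 k A p * yB16 k A p) c
        = ∑ p, (xB16 k A).repr (c * xB16 k A p) p := by
      rw [map_sum, LinearMap.sum_apply]
      refine Finset.sum_congr rfl fun p _ => ?_
      rw [xB16_repr]
      rw [bform16_apply, bform16_apply, tau16_comm, ← mul_assoc]
    have hR : bform16 k A 1 c = ∑ p, (xB16 k A).repr (c * xB16 k A p) p := by
      rw [bform16_apply, one_mul]
      show (LinearMap.trace k A) (LinearMap.mul k A c) = _
      rw [LinearMap.trace_eq_matrix_trace k (xB16 k A) (LinearMap.mul k A c)]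
      unfold Matrix.trace
      refine Finset.sum_congr rfl fun p _ => ?_
      rw [Matrix.diag_apply, LinearMap.toMatrix_apply, LinearMap.mul_apply']
    rw [hL, hR]
  have h2 := (bform16_nondeg (k := k) (A := A)).1 (∑ p, xB16 k A p * yB16 k A p - 1)
    (fun c => by rw [map_sub, LinearMap.sub_apply, h c, sub_self])
  exact sub_eq_zero.mp h2

lemma P2_16 {M : Type*} [AddCommGroup M] [Module k M]
    (φ : A →ₗ[k] A →ₗ[k] M) (c : A) :
    ∑ p, φ (c * xB16 k A p) (yB16 k A p) = ∑ p, φ (xB16 k A p) (yB16 k A p * c) := by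
  classical
  calc ∑ p, φ (c * xB16 k A p) (yB16 k A p)
      = ∑ p, ∑ j, bform16 k A (c * xB16 k A p) (yB16 k A j) • φ (xB16 k A j) (yB16 k A p) := by
        refine Finset.sum_congr rfl fun p _ => ?_
        conv_lhs => rw [← expand_x (k := k) (c * xB16 k A p)]
        simp [map_sum, map_smul, LinearMap.sum_apply,
          LinearMap.smul_apply]
    _ = ∑ p, ∑ j, bform16 k A (xB16 k A p) (yB16 k A j * c) • φ (xB16 k A j) (yB16 k A p) := by
        refine Finset.sum_congr rfl fun p _ => Finset.sum_congr rfl fun j _ => ?_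
        rw [bform16_shift]
    _ = ∑ p, ∑ j, bform16 k A (xB16 k A j) (yB16 k A p * c) • φ (xB16 k A p) (yB16 k A j) :=
        by rw [Finset.sum_comm]
    _ = ∑ p, φ (xB16 k A p) (yB16 k A p * c) := by
        refine Finset.sum_congr rfl fun p _ => ?_
        conv_rhs => rw [← expand_y (k := k) (yB16 k A p * c)]
        simp [map_sum, map_smul]

end DualBasis


/-- The Hochschild coboundary operator on (not necessarily multilinear) `n`-cochains
`Aⁿ → E`, for an `A`-bimodule `E` (the right action being encoded as an action of
`Aᵐᵒᵖ`). -/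
def hochschildCoboundary {A E : Type*} [Ring A] [AddCommGroup E]
    [Module A E] [Module Aᵐᵒᵖ E]
    (n : ℕ) (f : (Fin n → A) → E) : (Fin (n + 1) → A) → E :=
  fun a =>
    a 0 • f (fun i => a i.succ)
      + (Finset.range n).sum (fun i =>
          (-1 : ℤ) ^ (i + 1) • f (fun j =>
            if (j : ℕ) < i then a (Fin.castSucc j)
            else if (j : ℕ) = i then a (Fin.castSucc j) * a j.succ
            else a j.succ))
      + (-1 : ℤ) ^ (n + 1) •
          (MulOpposite.op (a (Fin.last n)) • f (fun j => a (Fin.castSucc j)))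

/-- Let `A` be a finite-dimensional semisimple algebra over a field of
characteristic zero and `E` an `A`-bimodule.  Then for every `n ≥ 0` the Hochschild
coboundary map `Cⁿ(A,E) → Z^{n+1}(A,E)` is surjective: every multilinear
`(n+1)`-cocycle is the coboundary of a multilinear `n`-cochain.  Equivalently,
`H^{n+1}(A,E) = 0` for all `n ≥ 0`. -/
theorem hochschild_coboundary_surjective
    {k A E : Type*} [Field k] [CharZero k] [Ring A] [Algebra k A]
    [FiniteDimensional k A] [IsSemisimpleRing A]
    [AddCommGroup E] [Module k E] [Module A E] [Module Aᵐᵒᵖ E]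
    [SMulCommClass A Aᵐᵒᵖ E] [IsScalarTower k A E] [IsScalarTower k Aᵐᵒᵖ E]
    (n : ℕ) (a : MultilinearMap k (fun _ : Fin (n + 1) => A) E)
    (hcoc : hochschildCoboundary (n + 1) ⇑a = 0) :
    ∃ b : MultilinearMap k (fun _ : Fin n => A) E,
      hochschildCoboundary n ⇑b = ⇑a := by
  classical
  set u : Fin (Module.finrank k A) → A := ⇑(xB16 k A) with hu
  set v : Fin (Module.finrank k A) → A := ⇑(yB16 k A) with hv
  refine ⟨∑ p, u p • (a.curryLeft (v p)), ?_⟩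
  set bb : MultilinearMap k (fun _ : Fin n => A) E :=
    ∑ p, u p • (a.curryLeft (v p)) with hbb
  have hb : ∀ w : Fin n → A, bb w = ∑ p, u p • a (Fin.cons (v p) w) := by
    intro w
    rw [hbb, MultilinearMap.sum_apply]
    exact Finset.sum_congr rfl fun p _ => by
      rw [MultilinearMap.smul_apply, MultilinearMap.curryLeft_apply]
  have hpow : ∀ (m : ℕ) (w : E), ((-1 : ℤ)) ^ (m + 1) • w = -(((-1 : ℤ)) ^ m • w) := by
    intro m w
    rw [pow_succ, mul_smul, neg_one_zsmul, smul_neg]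
  funext x
  have hf1 : ∀ p, (fun i : Fin (n + 1) => (Fin.cons (v p) x : Fin (n + 2) → A) i.succ) = x :=
    fun p => funext fun i => by simp
  have hf2 : ∀ p, (fun j : Fin (n + 1) => (Fin.cons (v p) x : Fin (n + 2) → A) (Fin.castSucc j))
      = Fin.cons (v p) (fun j : Fin n => x (Fin.castSucc j)) := by
    intro p
    funext j
    induction j using Fin.cases with
    | zero => simp
    | succ k => simp [← Fin.succ_castSucc]
  have hf3 : ∀ p, (fun j : Fin (n + 1) =>
        if (j : ℕ) < 0 then (Fin.cons (v p) x : Fin (n + 2) → A) (Fin.castSucc j)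
        else if (j : ℕ) = 0 then (Fin.cons (v p) x : Fin (n + 2) → A) (Fin.castSucc j) * (Fin.cons (v p) x : Fin (n + 2) → A) j.succ
        else (Fin.cons (v p) x : Fin (n + 2) → A) j.succ)
      = Fin.cons (v p * x 0) (fun i : Fin n => x i.succ) := by
    intro p
    funext j
    induction j using Fin.cases with
    | zero => simp
    | succ k => simp
  have hf4 : ∀ p (i : ℕ), (fun j : Fin (n + 1) =>
        if (j : ℕ) < i + 1 then (Fin.cons (v p) x : Fin (n + 2) → A) (Fin.castSucc j)
        else if (j : ℕ) = i + 1 then (Fin.cons (v p) x : Fin (n + 2) → A) (Fin.castSucc j) * (Fin.cons (v p) x : Fin (n + 2) → A) j.succ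
        else (Fin.cons (v p) x : Fin (n + 2) → A) j.succ)
      = Fin.cons (v p) (fun j : Fin n =>
          if (j : ℕ) < i then x (Fin.castSucc j)
          else if (j : ℕ) = i then x (Fin.castSucc j) * x j.succ
          else x j.succ) := by
    intro p i
    funext j
    induction j using Fin.cases with
    | zero => simp
    | succ k =>
      simp [← Fin.succ_castSucc, Fin.val_succ, add_lt_add_iff_right, add_left_inj]
  have hlast : ∀ p, (Fin.cons (v p) x : Fin (n + 2) → A) (Fin.last (n + 1)) = x (Fin.last n) := by
    intro p
    rw [← Fin.succ_last, Fin.cons_succ]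
  have hstep : ∀ p, u p • hochschildCoboundary (n + 1) (⇑a) (Fin.cons (v p) x)
      = (u p * v p) • a x
        + ((∑ i ∈ Finset.range n, -((-1 : ℤ) ^ (i + 1) • (u p • a (Fin.cons (v p)
              (fun j : Fin n =>
                if (j : ℕ) < i then x (Fin.castSucc j)
                else if (j : ℕ) = i then x (Fin.castSucc j) * x j.succ
                else x j.succ)))))
           + -(u p • a (Fin.cons (v p * x 0) (fun i : Fin n => x i.succ))))
        + -((-1 : ℤ) ^ (n + 1) • (MulOpposite.op (x (Fin.last n))
            • (u p • a (Fin.cons (v p) (fun j : Fin n => x (Fin.castSucc j)))))) := by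
    intro p
    rw [show hochschildCoboundary (n + 1) (⇑a) (Fin.cons (v p) x)
        = (Fin.cons (v p) x : Fin (n + 2) → A) 0 • a (fun i => (Fin.cons (v p) x : Fin (n + 2) → A) i.succ)
          + (Finset.range (n + 1)).sum (fun i =>
              (-1 : ℤ) ^ (i + 1) • a (fun j =>
                if (j : ℕ) < i then (Fin.cons (v p) x : Fin (n + 2) → A) (Fin.castSucc j)
                else if (j : ℕ) = i then
                  (Fin.cons (v p) x : Fin (n + 2) → A) (Fin.castSucc j) * (Fin.cons (v p) x : Fin (n + 2) → A) j.succ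
                else (Fin.cons (v p) x : Fin (n + 2) → A) j.succ))
          + (-1 : ℤ) ^ (n + 1 + 1) •
              (MulOpposite.op ((Fin.cons (v p) x : Fin (n + 2) → A) (Fin.last (n + 1))) •
                a (fun j => (Fin.cons (v p) x : Fin (n + 2) → A) (Fin.castSucc j))) from rfl]
    rw [smul_add, smul_add]
    congr 1
    · congr 1
      · rw [hf1 p, Fin.cons_zero, smul_smul]
      · rw [Finset.sum_range_succ']
        rw [smul_add, Finset.smul_sum]
        congr 1
        · refine Finset.sum_congr rfl fun i _ => ?_
          rw [hf4 p i, hpow, smul_neg, smul_comm]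
        · rw [hf3 p]
          simp only [zero_add, pow_one, neg_one_zsmul, smul_neg]
    · rw [hf2 p, hlast p, hpow, smul_neg, smul_comm (u p) ((-1 : ℤ) ^ (n + 1)),
        smul_comm (u p) (MulOpposite.op (x (Fin.last n)))]
  have h0 : ∑ p, u p • hochschildCoboundary (n + 1) (⇑a) (Fin.cons (v p) x) = 0 := by
    refine Finset.sum_eq_zero fun p _ => ?_
    have h := congrFun hcoc (Fin.cons (v p) x)
    rw [Pi.zero_apply] at h
    rw [h, smul_zero]
  have hphi : ∑ p, u p • a (Fin.cons (v p * x 0) (fun i : Fin n => x i.succ))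
      = x 0 • bb (fun i : Fin n => x i.succ) := by
    let φ : A →ₗ[k] A →ₗ[k] E := LinearMap.mk₂ k
      (fun c d => c • a (Fin.cons d (fun i : Fin n => x i.succ)))
      (fun c c' d => by simp only [add_smul])
      (fun s c d => by simp only [smul_assoc])
      (fun c d d' => by simp only [MultilinearMap.cons_add, smul_add])
      (fun s c d => by simp only [MultilinearMap.cons_smul]; exact (smul_comm s c _).symm)
    have h := P2_16 (k := k) (A := A) φ (x 0)
    rw [← hu, ← hv] at h
    simp only [φ, LinearMap.mk₂_apply] at h
    rw [← h]
    rw [hb]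
    rw [Finset.smul_sum]
    refine Finset.sum_congr rfl fun p _ => ?_
    rw [smul_smul]
  have h1 : ∑ p, u p • hochschildCoboundary (n + 1) (⇑a) (Fin.cons (v p) x)
      = a x
        + ((-(∑ i ∈ Finset.range n, (-1 : ℤ) ^ (i + 1) • bb (fun j : Fin n =>
              if (j : ℕ) < i then x (Fin.castSucc j)
              else if (j : ℕ) = i then x (Fin.castSucc j) * x j.succ
              else x j.succ)))
           + -(x 0 • bb (fun i : Fin n => x i.succ)))
        + -((-1 : ℤ) ^ (n + 1) • (MulOpposite.op (x (Fin.last n))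
            • bb (fun j : Fin n => x (Fin.castSucc j)))) := by
    calc ∑ p, u p • hochschildCoboundary (n + 1) (⇑a) (Fin.cons (v p) x)
        = ∑ p, ((u p * v p) • a x
          + ((∑ i ∈ Finset.range n, -((-1 : ℤ) ^ (i + 1) • (u p • a (Fin.cons (v p)
                (fun j : Fin n =>
                  if (j : ℕ) < i then x (Fin.castSucc j)
                  else if (j : ℕ) = i then x (Fin.castSucc j) * x j.succ
                  else x j.succ)))))
             + -(u p • a (Fin.cons (v p * x 0) (fun i : Fin n => x i.succ))))
          + -((-1 : ℤ) ^ (n + 1) • (MulOpposite.op (x (Fin.last n))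
              • (u p • a (Fin.cons (v p) (fun j : Fin n => x (Fin.castSucc j))))))) :=
          Finset.sum_congr rfl fun p _ => hstep p
      _ = (∑ p, (u p * v p) • a x)
          + ((∑ p, ∑ i ∈ Finset.range n, -((-1 : ℤ) ^ (i + 1) • (u p • a (Fin.cons (v p)
                (fun j : Fin n =>
                  if (j : ℕ) < i then x (Fin.castSucc j)
                  else if (j : ℕ) = i then x (Fin.castSucc j) * x j.succ
                  else x j.succ)))))
             + -(∑ p, u p • a (Fin.cons (v p * x 0) (fun i : Fin n => x i.succ))))
          + -((-1 : ℤ) ^ (n + 1) • (MulOpposite.op (x (Fin.last n))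
              • (∑ p, u p • a (Fin.cons (v p) (fun j : Fin n => x (Fin.castSucc j)))))) := by
          rw [Finset.sum_add_distrib, Finset.sum_add_distrib, Finset.sum_add_distrib,
            Finset.sum_neg_distrib, Finset.sum_neg_distrib,
            ← Finset.smul_sum, ← Finset.smul_sum]
      _ = _ := by
          congr 1
          · congr 1
            · rw [hu, hv, ← Finset.sum_smul, P1_16, one_smul]
            · congr 1
              · rw [Finset.sum_comm]
                calc ∑ i ∈ Finset.range n, ∑ p, -((-1 : ℤ) ^ (i + 1) • (u p • a (Fin.cons (v p)
                      (fun j : Fin n =>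
                        if (j : ℕ) < i then x (Fin.castSucc j)
                        else if (j : ℕ) = i then x (Fin.castSucc j) * x j.succ
                        else x j.succ))))
                    = ∑ i ∈ Finset.range n, -((-1 : ℤ) ^ (i + 1) • bb (fun j : Fin n =>
                        if (j : ℕ) < i then x (Fin.castSucc j)
                        else if (j : ℕ) = i then x (Fin.castSucc j) * x j.succ
                        else x j.succ)) := by
                      refine Finset.sum_congr rfl fun i _ => ?_
                      rw [Finset.sum_neg_distrib, ← Finset.smul_sum, ← hb]
                  _ = _ := by rw [Finset.sum_neg_distrib]
              · rw [hphi]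
          · rw [← hb]
  have h2 : a x
        + ((-(∑ i ∈ Finset.range n, (-1 : ℤ) ^ (i + 1) • bb (fun j : Fin n =>
              if (j : ℕ) < i then x (Fin.castSucc j)
              else if (j : ℕ) = i then x (Fin.castSucc j) * x j.succ
              else x j.succ)))
           + -(x 0 • bb (fun i : Fin n => x i.succ)))
        + -((-1 : ℤ) ^ (n + 1) • (MulOpposite.op (x (Fin.last n))
            • bb (fun j : Fin n => x (Fin.castSucc j)))) = 0 := h1.symm.trans h0
  show x 0 • bb (fun i : Fin n => x i.succ)
      + (Finset.range n).sum (fun i =>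
          (-1 : ℤ) ^ (i + 1) • bb (fun j : Fin n =>
            if (j : ℕ) < i then x (Fin.castSucc j)
            else if (j : ℕ) = i then x (Fin.castSucc j) * x j.succ
            else x j.succ))
      + (-1 : ℤ) ^ (n + 1) •
          (MulOpposite.op (x (Fin.last n)) • bb (fun j : Fin n => x (Fin.castSucc j)))
      = a x
  rw [← sub_eq_zero]
  rw [show x 0 • bb (fun i : Fin n => x i.succ)
      + (Finset.range n).sum (fun i =>
          (-1 : ℤ) ^ (i + 1) • bb (fun j : Fin n =>
            if (j : ℕ) < i then x (Fin.castSucc j)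
            else if (j : ℕ) = i then x (Fin.castSucc j) * x j.succ
            else x j.succ))
      + (-1 : ℤ) ^ (n + 1) •
          (MulOpposite.op (x (Fin.last n)) • bb (fun j : Fin n => x (Fin.castSucc j)))
      - a x
      = -(a x
        + ((-(∑ i ∈ Finset.range n, (-1 : ℤ) ^ (i + 1) • bb (fun j : Fin n =>
              if (j : ℕ) < i then x (Fin.castSucc j)
              else if (j : ℕ) = i then x (Fin.castSucc j) * x j.succ
              else x j.succ)))
           + -(x 0 • bb (fun i : Fin n => x i.succ)))
        + -((-1 : ℤ) ^ (n + 1) • (MulOpposite.op (x (Fin.last n))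
            • bb (fun j : Fin n => x (Fin.castSucc j))))) from by abel]
  rw [h2, neg_zero]
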